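/- Let $A^* = D_2(\Lambda)$ with $\Lambda\neq 0$ and let $K_\rho = \{k\in O_p : kA^* = A^*k \text{ and } kX^* = X^*\}$ with $X^* = rX_p^*$. Then every $k \in K_\rho$ is block diagonal, $k = \mathrm{diag}(\tilde k_1, \tilde k_2)$ with $\tilde k_1 \in O(2p_0)$ commuting with $D_2(\tilde\Lambda)$ and $\tilde k_2 \in O(p - 2p_0)$ fixing $X^*$, where $2p_0 = \mathrm{rank}\, D_2(\Lambda)$ and $\tilde\Lambda$ collects the nonzero $\lambda_i$; moreover $\det \tilde k_1 = 1$. -/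

import Mathlib

open Matrix

/-- The block-diagonal antisymmetric matrix `D₂(Λ)` with `2×2` diagonal blocks `λᵢ J`. -/
def D2 (p : ℕ) (Λ : Fin (p / 2) → ℝ) : Matrix (Fin p) (Fin p) ℝ := fun i j =>
  if h : i.val % 2 = 0 ∧ j.val = i.val + 1 then Λ ⟨i.val / 2, by omega⟩
  else if h' : j.val % 2 = 0 ∧ i.val = j.val + 1 then -Λ ⟨j.val / 2, by omega⟩
  else 0

/-- The vector `r X_p^*` (the last dual basis vector scaled by `r`). -/
def rXp (p : ℕ) (r : ℝ) : Fin p → ℝ := fun i => if i.val + 1 = p then r else 0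

section Helpers

lemma sum_split {M : Type*} [AddCommMonoid M] (n p : ℕ) (h : n ≤ p) (f : Fin p → M) :
    ∑ l : Fin p, f l = (∑ l : Fin n, f ⟨l.val, by omega⟩) +
      ∑ l : Fin (p - n), f ⟨n + l.val, by omega⟩ := by
  have hpn : n + (p - n) = p := by omega
  have := Fintype.sum_equiv (finSumFinEquiv.trans (finCongr hpn))
    (fun x : Fin n ⊕ Fin (p - n) => f ((finSumFinEquiv.trans (finCongr hpn)) x)) f
    (fun x => rfl)
  rw [← this, Fintype.sum_sum_type]
  congr 1 <;> apply Finset.sum_congr rfl <;> intro l _ <;> congr 1 <;>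
    apply Fin.ext <;> simp

lemma D2_entry_lt (p : ℕ) (Λ : Fin (p/2) → ℝ) (i j : Fin p) (h : i.val % 2 = 0)
    (h2 : j.val = i.val + 1) : D2 p Λ i j = Λ ⟨i.val / 2, by have := j.isLt; omega⟩ := by
  simp [D2, h, h2]

lemma D2_entry_gt (p : ℕ) (Λ : Fin (p/2) → ℝ) (i j : Fin p) (h : j.val % 2 = 0)
    (h2 : i.val = j.val + 1) : D2 p Λ i j = -Λ ⟨j.val / 2, by have := i.isLt; omega⟩ := by
  have hne : ¬ (i.val % 2 = 0 ∧ j.val = i.val + 1) := by omega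
  simp only [D2]
  rw [dif_neg hne, dif_pos ⟨h, h2⟩]

lemma D2_entry_zero (p : ℕ) (Λ : Fin (p/2) → ℝ) (i j : Fin p)
    (h : ¬ (i.val % 2 = 0 ∧ j.val = i.val + 1)) (h' : ¬ (j.val % 2 = 0 ∧ i.val = j.val + 1)) :
    D2 p Λ i j = 0 := by
  simp only [D2]
  rw [dif_neg h, dif_neg h']

lemma mulD2_col_even (p : ℕ) (Λ : Fin (p/2) → ℝ) (M : Matrix (Fin p) (Fin p) ℝ)
    (j : Fin p) (hj : j.val % 2 = 0) (hj1 : j.val + 1 < p) (i : Fin p) :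
    (M * D2 p Λ) i j = -Λ ⟨j.val / 2, by omega⟩ * M i ⟨j.val + 1, hj1⟩ := by
  rw [Matrix.mul_apply]
  rw [Finset.sum_eq_single (⟨j.val + 1, hj1⟩ : Fin p)]
  · rw [D2_entry_gt p Λ _ j hj rfl]; ring
  · intro l _ hl
    have h1 : ¬ (l.val % 2 = 0 ∧ j.val = l.val + 1) := by omega
    have h2 : ¬ (j.val % 2 = 0 ∧ l.val = j.val + 1) := fun hc => hl (Fin.ext hc.2)
    rw [D2_entry_zero p Λ l j h1 h2, mul_zero]
  · intro h; exact absurd (Finset.mem_univ _) h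

lemma mulD2_col_odd (p : ℕ) (Λ : Fin (p/2) → ℝ) (M : Matrix (Fin p) (Fin p) ℝ)
    (j : Fin p) (hj : j.val % 2 = 1) (i : Fin p) :
    (M * D2 p Λ) i j = Λ ⟨j.val / 2, by have := j.isLt; omega⟩ *
      M i ⟨j.val - 1, by have := j.isLt; omega⟩ := by
  rw [Matrix.mul_apply]
  rw [Finset.sum_eq_single (⟨j.val - 1, by have := j.isLt; omega⟩ : Fin p)]
  · rw [D2_entry_lt p Λ _ j (by simp; omega) (by simp; omega)]
    have : (⟨(j.val - 1) / 2, by have := j.isLt; omega⟩ : Fin (p/2))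
        = ⟨j.val / 2, by have := j.isLt; omega⟩ := by rw [Fin.mk.injEq]; omega
    rw [this]; ring
  · intro l _ hl
    have h1 : ¬ (l.val % 2 = 0 ∧ j.val = l.val + 1) := by
      rintro ⟨ha, hb⟩; exact hl (Fin.ext (show l.val = j.val - 1 by omega))
    have h2 : ¬ (j.val % 2 = 0 ∧ l.val = j.val + 1) := by omega
    rw [D2_entry_zero p Λ l j h1 h2, mul_zero]
  · intro h; exact absurd (Finset.mem_univ _) h

lemma D2mul_row_even (p : ℕ) (Λ : Fin (p/2) → ℝ) (M : Matrix (Fin p) (Fin p) ℝ)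
    (i : Fin p) (hi : i.val % 2 = 0) (hi1 : i.val + 1 < p) (j : Fin p) :
    (D2 p Λ * M) i j = Λ ⟨i.val / 2, by omega⟩ * M ⟨i.val + 1, hi1⟩ j := by
  rw [Matrix.mul_apply]
  rw [Finset.sum_eq_single (⟨i.val + 1, hi1⟩ : Fin p)]
  · rw [D2_entry_lt p Λ i _ hi rfl]
  · intro l _ hl
    have h1 : ¬ (i.val % 2 = 0 ∧ l.val = i.val + 1) := fun hc => hl (Fin.ext hc.2)
    have h2 : ¬ (l.val % 2 = 0 ∧ i.val = l.val + 1) := by omega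
    rw [D2_entry_zero p Λ i l h1 h2, zero_mul]
  · intro h; exact absurd (Finset.mem_univ _) h

lemma D2mul_row_odd (p : ℕ) (Λ : Fin (p/2) → ℝ) (M : Matrix (Fin p) (Fin p) ℝ)
    (i : Fin p) (hi : i.val % 2 = 1) (j : Fin p) :
    (D2 p Λ * M) i j = -Λ ⟨i.val / 2, by have := i.isLt; omega⟩ *
      M ⟨i.val - 1, by have := i.isLt; omega⟩ j := by
  rw [Matrix.mul_apply]
  rw [Finset.sum_eq_single (⟨i.val - 1, by have := i.isLt; omega⟩ : Fin p)]
  · rw [D2_entry_gt p Λ i _ (by simp; omega) (by simp; omega)]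
    have : (⟨(i.val - 1) / 2, by have := i.isLt; omega⟩ : Fin (p/2))
        = ⟨i.val / 2, by have := i.isLt; omega⟩ := by rw [Fin.mk.injEq]; omega
    rw [this]
  · intro l _ hl
    have h1 : ¬ (i.val % 2 = 0 ∧ l.val = i.val + 1) := by omega
    have h2 : ¬ (l.val % 2 = 0 ∧ i.val = l.val + 1) := by
      rintro ⟨ha, hb⟩; exact hl (Fin.ext (show l.val = i.val - 1 by omega))
    rw [D2_entry_zero p Λ i l h1 h2, zero_mul]
  · intro h; exact absurd (Finset.mem_univ _) h

lemma D2_row_zero (p p₀ : ℕ) (Λ : Fin (p/2) → ℝ)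
    (hzero : ∀ a : Fin (p/2), p₀ ≤ a.val → Λ a = 0)
    (i j : Fin p) (hi : 2 * p₀ ≤ i.val) : D2 p Λ i j = 0 := by
  simp only [D2]
  split_ifs with h1 h2
  · exact hzero _ (by simp; omega)
  · rw [hzero _ (by simp; omega), neg_zero]
  · rfl

lemma D2_col_zero (p p₀ : ℕ) (Λ : Fin (p/2) → ℝ)
    (hzero : ∀ a : Fin (p/2), p₀ ≤ a.val → Λ a = 0)
    (i j : Fin p) (hj : 2 * p₀ ≤ j.val) : D2 p Λ i j = 0 := by
  simp only [D2]
  split_ifs with h1 h2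
  · exact hzero _ (by simp; omega)
  · rw [hzero _ (by simp; omega), neg_zero]
  · rfl

-- primed versions with explicit target indices
lemma mulD2_col_even' (p : ℕ) (Λ : Fin (p/2) → ℝ) (M : Matrix (Fin p) (Fin p) ℝ)
    (j j' : Fin p) (c : Fin (p/2)) (hj : j.val = 2 * c.val) (hj' : j'.val = j.val + 1)
    (i : Fin p) : (M * D2 p Λ) i j = -(Λ c * M i j') := by
  have hj1 : j.val + 1 < p := by have := j'.isLt; omega
  rw [mulD2_col_even p Λ M j (by omega) hj1]
  have h1 : (⟨j.val / 2, by omega⟩ : Fin (p/2)) = c := Fin.ext (show j.val / 2 = c.val by omega)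
  have h2 : (⟨j.val + 1, hj1⟩ : Fin p) = j' := Fin.ext (show j.val + 1 = j'.val by omega)
  rw [h1, h2]; ring

lemma mulD2_col_odd' (p : ℕ) (Λ : Fin (p/2) → ℝ) (M : Matrix (Fin p) (Fin p) ℝ)
    (j j' : Fin p) (c : Fin (p/2)) (hj : j.val = 2 * c.val + 1) (hj' : j'.val + 1 = j.val)
    (i : Fin p) : (M * D2 p Λ) i j = Λ c * M i j' := by
  rw [mulD2_col_odd p Λ M j (by omega)]
  have h1 : (⟨j.val / 2, by have := j.isLt; omega⟩ : Fin (p/2)) = c :=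
    Fin.ext (show j.val / 2 = c.val by omega)
  have h2 : (⟨j.val - 1, by have := j.isLt; omega⟩ : Fin p) = j' :=
    Fin.ext (show j.val - 1 = j'.val by omega)
  rw [h1, h2]

lemma D2mul_row_even' (p : ℕ) (Λ : Fin (p/2) → ℝ) (M : Matrix (Fin p) (Fin p) ℝ)
    (i i' : Fin p) (c : Fin (p/2)) (hi : i.val = 2 * c.val) (hi' : i'.val = i.val + 1)
    (j : Fin p) : (D2 p Λ * M) i j = Λ c * M i' j := by
  have hi1 : i.val + 1 < p := by have := i'.isLt; omega
  rw [D2mul_row_even p Λ M i (by omega) hi1]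
  have h1 : (⟨i.val / 2, by omega⟩ : Fin (p/2)) = c := Fin.ext (show i.val / 2 = c.val by omega)
  have h2 : (⟨i.val + 1, hi1⟩ : Fin p) = i' := Fin.ext (show i.val + 1 = i'.val by omega)
  rw [h1, h2]

lemma D2mul_row_odd' (p : ℕ) (Λ : Fin (p/2) → ℝ) (M : Matrix (Fin p) (Fin p) ℝ)
    (i i' : Fin p) (c : Fin (p/2)) (hi : i.val = 2 * c.val + 1) (hi' : i'.val + 1 = i.val)
    (j : Fin p) : (D2 p Λ * M) i j = -(Λ c * M i' j) := by
  rw [D2mul_row_odd p Λ M i (by omega)]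
  have h1 : (⟨i.val / 2, by have := i.isLt; omega⟩ : Fin (p/2)) = c :=
    Fin.ext (show i.val / 2 = c.val by omega)
  have h2 : (⟨i.val - 1, by have := i.isLt; omega⟩ : Fin p) = i' :=
    Fin.ext (show i.val - 1 = i'.val by omega)
  rw [h1, h2]; ring

open Complex in
lemma det_one_of_comm_J {m : ℕ} (M : Matrix (Fin (2*m)) (Fin (2*m)) ℝ)
    (hO : M * Mᵀ = 1)
    (hs1 : ∀ a b : Fin m, M ⟨2*a.val, by omega⟩ ⟨2*b.val, by omega⟩
      = M ⟨2*a.val+1, by omega⟩ ⟨2*b.val+1, by omega⟩)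
    (hs2 : ∀ a b : Fin m, M ⟨2*a.val, by omega⟩ ⟨2*b.val+1, by omega⟩
      = - M ⟨2*a.val+1, by omega⟩ ⟨2*b.val, by omega⟩) :
    M.det = 1 := by
  have hf : Function.Bijective (Sum.elim (fun a : Fin m => (⟨2*a.val, by omega⟩ : Fin (2*m)))
      (fun a : Fin m => (⟨2*a.val+1, by omega⟩ : Fin (2*m)))) := by
    rw [Fintype.bijective_iff_injective_and_card]
    constructor
    · rintro (a|a) (b|b) h <;> simp only [Sum.elim_inl, Sum.elim_inr, Fin.mk.injEq] at h <;>
        first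
        | (exact congrArg Sum.inl (Fin.ext (by omega)))
        | (exact congrArg Sum.inr (Fin.ext (by omega)))
        | omega
    · simp [two_mul]
  set ε : Fin m ⊕ Fin m ≃ Fin (2*m) := Equiv.ofBijective _ hf with hε
  set M₁ : Matrix (Fin m) (Fin m) ℂ :=
    fun a b => ((M ⟨2*a.val, by omega⟩ ⟨2*b.val, by omega⟩ : ℝ) : ℂ) with hM₁
  set M₂ : Matrix (Fin m) (Fin m) ℂ :=
    fun a b => ((M ⟨2*a.val, by omega⟩ ⟨2*b.val+1, by omega⟩ : ℝ) : ℂ) with hM₂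
  set M₃ : Matrix (Fin m) (Fin m) ℂ :=
    fun a b => ((M ⟨2*a.val+1, by omega⟩ ⟨2*b.val, by omega⟩ : ℝ) : ℂ) with hM₃
  set M₄ : Matrix (Fin m) (Fin m) ℂ :=
    fun a b => ((M ⟨2*a.val+1, by omega⟩ ⟨2*b.val+1, by omega⟩ : ℝ) : ℂ) with hM₄
  set C : Matrix (Fin m) (Fin m) ℂ := M₁ - Complex.I • M₃ with hC
  set Mc : Matrix (Fin m ⊕ Fin m) (Fin m ⊕ Fin m) ℂ :=
    (M.map (Complex.ofRealHom)).submatrix ε ε with hMc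
  have hMcB : Mc = fromBlocks M₁ M₂ M₃ M₄ := by
    ext x y
    rcases x with a|a <;> rcases y with b|b <;> rfl
  set Q : Matrix (Fin m ⊕ Fin m) (Fin m ⊕ Fin m) ℂ :=
    fromBlocks 1 1 (Complex.I • 1) ((-Complex.I) • 1) with hQ
  set R : Matrix (Fin m ⊕ Fin m) (Fin m ⊕ Fin m) ℂ :=
    fromBlocks ((1/2 : ℂ) • 1) ((-Complex.I/2) • 1) ((1/2 : ℂ) • 1) ((Complex.I/2) • 1) with hR
  have hRQ : R * Q = 1 := by
    rw [hR, hQ, Matrix.fromBlocks_multiply, ← Matrix.fromBlocks_one, Matrix.fromBlocks_inj]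
    refine ⟨?_, ?_, ?_, ?_⟩ <;>
      simp only [Matrix.smul_mul, Matrix.mul_smul, Matrix.one_mul, Matrix.mul_one,
        smul_smul, ← add_smul] <;>
      ext a b <;>
      simp only [Matrix.smul_apply, Matrix.one_apply, Matrix.zero_apply, smul_eq_mul,
        mul_ite, mul_one, mul_zero] <;>
      split_ifs <;>
      norm_num [Complex.ext_iff]
  set N : Matrix (Fin m ⊕ Fin m) (Fin m ⊕ Fin m) ℂ :=
    fromBlocks C 0 0 (C.map (starRingEnd ℂ)) with hN
  have key : Mc * Q = Q * N := by
    rw [hMcB, hQ, hN, Matrix.fromBlocks_multiply, Matrix.fromBlocks_multiply,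
      Matrix.fromBlocks_inj]
    refine ⟨?_, ?_, ?_, ?_⟩ <;>
      simp only [Matrix.mul_one, Matrix.mul_smul, Matrix.one_mul, Matrix.smul_mul,
        Matrix.mul_zero, Matrix.zero_mul, add_zero, zero_add, hC] <;>
      ext a b <;>
      simp only [Matrix.add_apply, Matrix.sub_apply, Matrix.smul_apply, Matrix.map_apply,
        smul_eq_mul, map_sub, _root_.map_mul, Complex.conj_ofReal,
        Complex.conj_I] <;>
      simp only [hM₁, hM₂, hM₃, hM₄, Complex.conj_ofReal]
    · rw [hs2 a b]; push_cast; ring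
    · rw [hs2 a b]; push_cast; ring
    · rw [← hs1 a b]; push_cast; ring_nf; rw [Complex.I_sq]; ring
    · rw [← hs1 a b]; push_cast; ring_nf; rw [Complex.I_sq]; ring
  have hdetQ : Q.det ≠ 0 := by
    intro h0
    have h1 : (R * Q).det = 0 := by rw [Matrix.det_mul, h0, mul_zero]
    rw [hRQ, Matrix.det_one] at h1
    exact one_ne_zero h1
  have hdet1 : Mc.det = N.det := by
    have h2 := congrArg Matrix.det key
    rw [Matrix.det_mul, Matrix.det_mul] at h2
    exact mul_right_cancel₀ hdetQ (by rw [h2, mul_comm])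
  have hMcdet : Mc.det = (M.det : ℂ) := by
    rw [hMc, Matrix.det_submatrix_equiv_self, ← RingHom.mapMatrix_apply, ← RingHom.map_det]
    rfl
  have hNdet : N.det = (Complex.normSq C.det : ℂ) := by
    rw [hN, Matrix.det_fromBlocks_zero₂₁, ← RingHom.mapMatrix_apply, ← RingHom.map_det,
      Complex.mul_conj]
  have hnn : (0:ℝ) ≤ M.det := by
    have h3 : (M.det : ℂ) = (Complex.normSq C.det : ℂ) := by rw [← hMcdet, hdet1, hNdet]
    rw [Complex.ofReal_inj.mp h3]
    exact Complex.normSq_nonneg _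
  have hsq : M.det * M.det = 1 := by
    have h4 := congrArg Matrix.det hO
    rwa [Matrix.det_mul, Matrix.det_transpose, Matrix.det_one] at h4
  nlinarith

end Helpers

theorem stability_group_block_structure (p p₀ : ℕ) (h2p₀ : 2 * p₀ ≤ p)
    (Λ : Fin (p / 2) → ℝ) (hΛ : Antitone Λ) (hΛpos : ∀ i, 0 ≤ Λ i)
    (hΛne : Λ ≠ 0)
    -- `p₀` is the number of nonzero `λᵢ` (`Λ` being sorted, these come first)
    (hp₀ : ∀ i : Fin (p / 2), Λ i ≠ 0 ↔ i.val < p₀)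
    (r : ℝ) (hr : 0 ≤ r) (hr0 : 2 * p₀ = p → r = 0)
    (k : Matrix (Fin p) (Fin p) ℝ) (hk : k ∈ Matrix.orthogonalGroup (Fin p) ℝ)
    (hcomm : k * D2 p Λ = D2 p Λ * k) (hfix : k.mulVec (rXp p r) = rXp p r) :
    -- `k` is block diagonal `diag(k̃₁, k̃₂)` with respect to `ℝ^p = ℝ^{2p₀} ⊕ ℝ^{p-2p₀}`:
    (∀ i j : Fin p, ((i.val < 2 * p₀ ∧ ¬ j.val < 2 * p₀) ∨
        (¬ i.val < 2 * p₀ ∧ j.val < 2 * p₀)) → k i j = 0) ∧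
    -- the upper-left block `k̃₁` is orthogonal and commutes with `D₂(Λ̃)`
    -- (the upper-left block of `D₂(Λ)`, which collects the nonzero `λᵢ`):
    (k.submatrix (fun i : Fin (2 * p₀) => (⟨i.val, by omega⟩ : Fin p))
          (fun j : Fin (2 * p₀) => (⟨j.val, by omega⟩ : Fin p))
        ∈ Matrix.orthogonalGroup (Fin (2 * p₀)) ℝ) ∧
    (k.submatrix (fun i : Fin (2 * p₀) => (⟨i.val, by omega⟩ : Fin p))
          (fun j : Fin (2 * p₀) => (⟨j.val, by omega⟩ : Fin p)) *
        (D2 p Λ).submatrix (fun i : Fin (2 * p₀) => (⟨i.val, by omega⟩ : Fin p))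
          (fun j : Fin (2 * p₀) => (⟨j.val, by omega⟩ : Fin p))
      = (D2 p Λ).submatrix (fun i : Fin (2 * p₀) => (⟨i.val, by omega⟩ : Fin p))
          (fun j : Fin (2 * p₀) => (⟨j.val, by omega⟩ : Fin p)) *
        k.submatrix (fun i : Fin (2 * p₀) => (⟨i.val, by omega⟩ : Fin p))
          (fun j : Fin (2 * p₀) => (⟨j.val, by omega⟩ : Fin p))) ∧
    -- the lower-right block `k̃₂` is orthogonal and fixes `X* = r X_p^*`:
    (k.submatrix (fun i : Fin (p - 2 * p₀) => (⟨2 * p₀ + i.val, by omega⟩ : Fin p))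
          (fun j : Fin (p - 2 * p₀) => (⟨2 * p₀ + j.val, by omega⟩ : Fin p))
        ∈ Matrix.orthogonalGroup (Fin (p - 2 * p₀)) ℝ) ∧
    ((k.submatrix (fun i : Fin (p - 2 * p₀) => (⟨2 * p₀ + i.val, by omega⟩ : Fin p))
          (fun j : Fin (p - 2 * p₀) => (⟨2 * p₀ + j.val, by omega⟩ : Fin p))).mulVec
        (rXp (p - 2 * p₀) r) = rXp (p - 2 * p₀) r) ∧
    -- moreover `det k̃₁ = 1`:
    (k.submatrix (fun i : Fin (2 * p₀) => (⟨i.val, by omega⟩ : Fin p))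
          (fun j : Fin (2 * p₀) => (⟨j.val, by omega⟩ : Fin p))).det = 1 := by
  have hzero : ∀ a : Fin (p/2), p₀ ≤ a.val → Λ a = 0 := by
    intro a ha
    by_contra h
    have := (hp₀ a).1 h
    omega
  have hpos : ∀ a : Fin (p/2), a.val < p₀ → 0 < Λ a := fun a ha =>
    lt_of_le_of_ne (hΛpos a) (Ne.symm ((hp₀ a).2 ha))
  have hk1 : k * kᵀ = 1 := by
    have h := (Matrix.mem_orthogonalGroup_iff (Fin p) ℝ).mp hk
    have hst : star k = kᵀ := by
      ext i j; simp [Matrix.star_apply]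
    exact h
  -- block vanishing
  have hblock1 : ∀ i j : Fin p, i.val < 2*p₀ → 2*p₀ ≤ j.val → k i j = 0 := by
    intro i j hi hj
    have hAk : ∀ i' : Fin p, (D2 p Λ * k) i' j = 0 := by
      intro i'
      rw [← hcomm, Matrix.mul_apply]
      exact Finset.sum_eq_zero fun l _ => by
        rw [D2_col_zero p p₀ Λ hzero l j hj, mul_zero]
    by_cases hpar : i.val % 2 = 0
    · have hi1 : i.val + 1 < p := by omega
      have h0 := hAk ⟨i.val + 1, hi1⟩
      rw [D2mul_row_odd' p Λ k ⟨i.val + 1, hi1⟩ i ⟨(i.val+1)/2, by omega⟩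
        (by simp; omega) (by simp) j] at h0
      have hpΛ := hpos ⟨(i.val+1)/2, by omega⟩ (show (i.val+1)/2 < p₀ by omega)
      have := neg_eq_zero.mp h0
      rcases mul_eq_zero.mp this with h | h
      · exact absurd h hpΛ.ne'
      · exact h
    · have hi1 : i.val - 1 < p := by omega
      have h0 := hAk ⟨i.val - 1, hi1⟩
      rw [D2mul_row_even' p Λ k ⟨i.val - 1, hi1⟩ i ⟨(i.val-1)/2, by omega⟩
        (by simp; omega) (by simp; omega) j] at h0
      have hpΛ := hpos ⟨(i.val-1)/2, by omega⟩ (show (i.val-1)/2 < p₀ by omega)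
      rcases mul_eq_zero.mp h0 with h | h
      · exact absurd h hpΛ.ne'
      · exact h
  have hblock2 : ∀ i j : Fin p, 2*p₀ ≤ i.val → j.val < 2*p₀ → k i j = 0 := by
    intro i j hi hj
    have hkA : ∀ j' : Fin p, (k * D2 p Λ) i j' = 0 := by
      intro j'
      rw [hcomm, Matrix.mul_apply]
      exact Finset.sum_eq_zero fun l _ => by
        rw [D2_row_zero p p₀ Λ hzero i l hi, zero_mul]
    by_cases hpar : j.val % 2 = 0
    · have hj1 : j.val + 1 < p := by omega
      have h0 := hkA ⟨j.val + 1, hj1⟩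
      rw [mulD2_col_odd' p Λ k ⟨j.val + 1, hj1⟩ j ⟨(j.val+1)/2, by omega⟩
        (by simp; omega) (by simp) i] at h0
      have hpΛ := hpos ⟨(j.val+1)/2, by omega⟩ (show (j.val+1)/2 < p₀ by omega)
      rcases mul_eq_zero.mp h0 with h | h
      · exact absurd h hpΛ.ne'
      · exact h
    · have hj1 : j.val - 1 < p := by omega
      have h0 := hkA ⟨j.val - 1, hj1⟩
      rw [mulD2_col_even' p Λ k ⟨j.val - 1, hj1⟩ j ⟨(j.val-1)/2, by omega⟩
        (by simp; omega) (by simp; omega) i] at h0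
      have hpΛ := hpos ⟨(j.val-1)/2, by omega⟩ (show (j.val-1)/2 < p₀ by omega)
      have := neg_eq_zero.mp h0
      rcases mul_eq_zero.mp this with h | h
      · exact absurd h hpΛ.ne'
      · exact h
  -- upper-left block orthogonal
  have horth1 : k.submatrix (fun i : Fin (2 * p₀) => (⟨i.val, by omega⟩ : Fin p))
      (fun j : Fin (2 * p₀) => (⟨j.val, by omega⟩ : Fin p))
      ∈ Matrix.orthogonalGroup (Fin (2 * p₀)) ℝ := by
    rw [Matrix.mem_orthogonalGroup_iff]
    ext i j
    rw [Matrix.mul_apply]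
    have hi' : i.val < p := by have := i.isLt; omega
    have hj' : j.val < p := by have := j.isLt; omega
    have hfull := congrFun (congrFun hk1 ⟨i.val, hi'⟩) ⟨j.val, hj'⟩
    rw [Matrix.mul_apply,
      sum_split (2*p₀) p h2p₀ (fun l => k ⟨i.val, hi'⟩ l * kᵀ l ⟨j.val, hj'⟩)] at hfull
    have hz : ∑ l : Fin (p - 2*p₀),
        k ⟨i.val, hi'⟩ ⟨2*p₀ + l.val, by omega⟩ * kᵀ ⟨2*p₀ + l.val, by omega⟩ ⟨j.val, hj'⟩
        = 0 := Finset.sum_eq_zero fun l _ => by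
      rw [hblock1 ⟨i.val, hi'⟩ ⟨2*p₀ + l.val, by omega⟩ i.isLt
        (show 2*p₀ ≤ 2*p₀ + l.val from Nat.le_add_right _ _), zero_mul]
    rw [hz, add_zero] at hfull
    calc ∑ l : Fin (2*p₀), k.submatrix _ _ i l * star (k.submatrix _ _) l j
        = ∑ l : Fin (2*p₀), k ⟨i.val, hi'⟩ ⟨l.val, by omega⟩ *
            kᵀ ⟨l.val, by omega⟩ ⟨j.val, hj'⟩ := by
          apply Finset.sum_congr rfl
          intro l _
          simp [Matrix.star_apply, Matrix.transpose_apply, Matrix.submatrix_apply]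
      _ = (1 : Matrix (Fin p) (Fin p) ℝ) ⟨i.val, hi'⟩ ⟨j.val, hj'⟩ := hfull
      _ = (1 : Matrix (Fin (2*p₀)) (Fin (2*p₀)) ℝ) i j := by
          rw [Matrix.one_apply, Matrix.one_apply]
          by_cases hij : i = j
          · subst hij; simp [Matrix.one_apply]
          · have hne' : (⟨i.val, hi'⟩ : Fin p) ≠ ⟨j.val, hj'⟩ := by
              intro hc
              rw [Fin.mk.injEq] at hc
              exact hij (Fin.ext hc)
            simp [Matrix.one_apply, hne', hij]
  -- lower-right block orthogonal
  have horth2 : k.submatrix (fun i : Fin (p - 2 * p₀) => (⟨2 * p₀ + i.val, by omega⟩ : Fin p))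
      (fun j : Fin (p - 2 * p₀) => (⟨2 * p₀ + j.val, by omega⟩ : Fin p))
      ∈ Matrix.orthogonalGroup (Fin (p - 2 * p₀)) ℝ := by
    rw [Matrix.mem_orthogonalGroup_iff]
    ext i j
    rw [Matrix.mul_apply]
    have hi' : 2*p₀ + i.val < p := by have := i.isLt; omega
    have hj' : 2*p₀ + j.val < p := by have := j.isLt; omega
    have hfull := congrFun (congrFun hk1 ⟨2*p₀ + i.val, hi'⟩) ⟨2*p₀ + j.val, hj'⟩
    rw [Matrix.mul_apply, sum_split (2*p₀) p h2p₀
      (fun l => k ⟨2*p₀ + i.val, hi'⟩ l * kᵀ l ⟨2*p₀ + j.val, hj'⟩)] at hfull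
    have hz : ∑ l : Fin (2*p₀),
        k ⟨2*p₀ + i.val, hi'⟩ ⟨l.val, by omega⟩ * kᵀ ⟨l.val, by omega⟩ ⟨2*p₀ + j.val, hj'⟩
        = 0 := Finset.sum_eq_zero fun l _ => by
      rw [hblock2 ⟨2*p₀ + i.val, hi'⟩ ⟨l.val, by omega⟩
        (show 2*p₀ ≤ 2*p₀ + i.val from Nat.le_add_right _ _) l.isLt, zero_mul]
    rw [hz, zero_add] at hfull
    calc ∑ l : Fin (p - 2*p₀), k.submatrix _ _ i l * star (k.submatrix _ _) l j
        = ∑ l : Fin (p - 2*p₀), k ⟨2*p₀ + i.val, hi'⟩ ⟨2*p₀ + l.val, by omega⟩ *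
            kᵀ ⟨2*p₀ + l.val, by omega⟩ ⟨2*p₀ + j.val, hj'⟩ := by
          apply Finset.sum_congr rfl
          intro l _
          simp [Matrix.star_apply, Matrix.transpose_apply, Matrix.submatrix_apply]
      _ = (1 : Matrix (Fin p) (Fin p) ℝ) ⟨2*p₀ + i.val, hi'⟩ ⟨2*p₀ + j.val, hj'⟩ := hfull
      _ = (1 : Matrix (Fin (p - 2*p₀)) (Fin (p - 2*p₀)) ℝ) i j := by
          rw [Matrix.one_apply, Matrix.one_apply]
          by_cases hij : i = j
          · subst hij; simp [Matrix.one_apply]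
          · have hne' : (⟨2*p₀ + i.val, hi'⟩ : Fin p) ≠ ⟨2*p₀ + j.val, hj'⟩ := by
              intro hc
              rw [Fin.mk.injEq] at hc
              exact hij (Fin.ext (by omega))
            simp [Matrix.one_apply, hne', hij]
  -- commutation of upper-left blocks
  have hcommb : k.submatrix (fun i : Fin (2 * p₀) => (⟨i.val, by omega⟩ : Fin p))
        (fun j : Fin (2 * p₀) => (⟨j.val, by omega⟩ : Fin p)) *
      (D2 p Λ).submatrix (fun i : Fin (2 * p₀) => (⟨i.val, by omega⟩ : Fin p))
        (fun j : Fin (2 * p₀) => (⟨j.val, by omega⟩ : Fin p))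
      = (D2 p Λ).submatrix (fun i : Fin (2 * p₀) => (⟨i.val, by omega⟩ : Fin p))
        (fun j : Fin (2 * p₀) => (⟨j.val, by omega⟩ : Fin p)) *
      k.submatrix (fun i : Fin (2 * p₀) => (⟨i.val, by omega⟩ : Fin p))
        (fun j : Fin (2 * p₀) => (⟨j.val, by omega⟩ : Fin p)) := by
    ext i j
    rw [Matrix.mul_apply, Matrix.mul_apply]
    have hi' : i.val < p := by have := i.isLt; omega
    have hj' : j.val < p := by have := j.isLt; omega
    have hfull := congrFun (congrFun hcomm ⟨i.val, hi'⟩) ⟨j.val, hj'⟩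
    rw [Matrix.mul_apply, Matrix.mul_apply,
      sum_split (2*p₀) p h2p₀ (fun l => k ⟨i.val, hi'⟩ l * D2 p Λ l ⟨j.val, hj'⟩),
      sum_split (2*p₀) p h2p₀ (fun l => D2 p Λ ⟨i.val, hi'⟩ l * k l ⟨j.val, hj'⟩)] at hfull
    have hz1 : ∑ l : Fin (p - 2*p₀),
        k ⟨i.val, hi'⟩ ⟨2*p₀ + l.val, by omega⟩ * D2 p Λ ⟨2*p₀ + l.val, by omega⟩ ⟨j.val, hj'⟩
        = 0 := Finset.sum_eq_zero fun l _ => by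
      rw [D2_row_zero p p₀ Λ hzero _ _ (show 2*p₀ ≤ 2*p₀ + l.val from Nat.le_add_right _ _),
        mul_zero]
    have hz2 : ∑ l : Fin (p - 2*p₀),
        D2 p Λ ⟨i.val, hi'⟩ ⟨2*p₀ + l.val, by omega⟩ * k ⟨2*p₀ + l.val, by omega⟩ ⟨j.val, hj'⟩
        = 0 := Finset.sum_eq_zero fun l _ => by
      rw [D2_col_zero p p₀ Λ hzero _ _ (show 2*p₀ ≤ 2*p₀ + l.val from Nat.le_add_right _ _),
        zero_mul]
    rw [hz1, hz2, add_zero, add_zero] at hfull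
    calc ∑ l : Fin (2*p₀), k.submatrix _ _ i l * (D2 p Λ).submatrix _ _ l j
        = ∑ l : Fin (2*p₀), k ⟨i.val, hi'⟩ ⟨l.val, by omega⟩ *
            D2 p Λ ⟨l.val, by omega⟩ ⟨j.val, hj'⟩ := by
          apply Finset.sum_congr rfl; intro l _
          simp [Matrix.submatrix_apply]
      _ = ∑ l : Fin (2*p₀), D2 p Λ ⟨i.val, hi'⟩ ⟨l.val, by omega⟩ *
            k ⟨l.val, by omega⟩ ⟨j.val, hj'⟩ := hfull
      _ = ∑ l : Fin (2*p₀), (D2 p Λ).submatrix _ _ i l * k.submatrix _ _ l j := by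
          apply Finset.sum_congr rfl; intro l _
          simp [Matrix.submatrix_apply]
  -- lower-right block fixes the vector
  have hfix2 : (k.submatrix (fun i : Fin (p - 2 * p₀) => (⟨2 * p₀ + i.val, by omega⟩ : Fin p))
        (fun j : Fin (p - 2 * p₀) => (⟨2 * p₀ + j.val, by omega⟩ : Fin p))).mulVec
      (rXp (p - 2 * p₀) r) = rXp (p - 2 * p₀) r := by
    by_cases hm : p - 2*p₀ = 0
    · funext i
      exact absurd i.isLt (by omega)
    · funext i
      have hi' : 2*p₀ + i.val < p := by have := i.isLt; omega
      have hlast : p - 1 < p := by omega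
      have hfull := congrFun hfix ⟨2*p₀ + i.val, hi'⟩
      rw [Matrix.mulVec] at hfull
      have hL : k.mulVec (rXp p r) ⟨2*p₀ + i.val, hi'⟩
          = k ⟨2*p₀ + i.val, hi'⟩ ⟨p - 1, hlast⟩ * r := by
        rw [Matrix.mulVec, dotProduct]
        rw [Finset.sum_eq_single (⟨p - 1, hlast⟩ : Fin p)]
        · rw [show rXp p r ⟨p-1, hlast⟩ = r from if_pos (show p - 1 + 1 = p by omega)]
        · intro l _ hl
          rw [show rXp p r l = 0 from
            if_neg (fun hc => hl (Fin.ext (show l.val = p - 1 by omega))), mul_zero]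
        · intro h; exact absurd (Finset.mem_univ _) h
      have hfull' := congrFun hfix ⟨2*p₀ + i.val, hi'⟩
      rw [hL] at hfull'
      have hR : rXp p r ⟨2*p₀ + i.val, hi'⟩ = rXp (p - 2*p₀) r i := by
        simp only [rXp]
        by_cases hc : i.val + 1 = p - 2*p₀
        · rw [if_pos (show 2*p₀ + i.val + 1 = p by omega), if_pos hc]
        · rw [if_neg (show ¬ (2*p₀ + i.val + 1 = p) by omega), if_neg hc]
      rw [hR] at hfull'
      rw [Matrix.mulVec, dotProduct]
      rw [Finset.sum_eq_single (⟨p - 2*p₀ - 1, by omega⟩ : Fin (p - 2*p₀))]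
      · rw [show rXp (p - 2*p₀) r ⟨p - 2*p₀ - 1, by omega⟩ = r
          from if_pos (show p - 2*p₀ - 1 + 1 = p - 2*p₀ by omega)]
        rw [← hfull', Matrix.submatrix_apply,
          show (⟨2*p₀ + (⟨p - 2*p₀ - 1, by omega⟩ : Fin (p - 2*p₀)).val, by omega⟩ : Fin p)
            = ⟨p - 1, hlast⟩ from Fin.ext (show 2*p₀ + (p - 2*p₀ - 1) = p - 1 by omega)]
      · intro l _ hl
        rw [show rXp (p - 2*p₀) r l = 0 from
          if_neg (fun hc => hl (Fin.ext (show l.val = p - 2*p₀ - 1 by omega))), mul_zero]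
      · intro h; exact absurd (Finset.mem_univ _) h
  -- determinant of upper-left block
  have hdet : (k.submatrix (fun i : Fin (2 * p₀) => (⟨i.val, by omega⟩ : Fin p))
      (fun j : Fin (2 * p₀) => (⟨j.val, by omega⟩ : Fin p))).det = 1 := by
    apply det_one_of_comm_J
    · have h := (Matrix.mem_orthogonalGroup_iff (Fin (2*p₀)) ℝ).mp horth1
      have hst : star (k.submatrix (fun i : Fin (2 * p₀) => (⟨i.val, by omega⟩ : Fin p))
          (fun j : Fin (2 * p₀) => (⟨j.val, by omega⟩ : Fin p)))
          = (k.submatrix (fun i : Fin (2 * p₀) => (⟨i.val, by omega⟩ : Fin p))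
          (fun j : Fin (2 * p₀) => (⟨j.val, by omega⟩ : Fin p)))ᵀ := by
        ext i j; simp [Matrix.star_apply]
      exact h
    · -- hs1
      intro a b
      have ha2 : 2*a.val < p := by have := a.isLt; omega
      have ha2' : 2*a.val + 1 < p := by have := a.isLt; omega
      have hb2 : 2*b.val < p := by have := b.isLt; omega
      have hb2' : 2*b.val + 1 < p := by have := b.isLt; omega
      have hca : a.val < p/2 := by have := a.isLt; omega
      have hcb : b.val < p/2 := by have := b.isLt; omega
      set i0 : Fin p := ⟨2*a.val, ha2⟩
      set i1 : Fin p := ⟨2*a.val+1, ha2'⟩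
      set j0 : Fin p := ⟨2*b.val, hb2⟩
      set j1 : Fin p := ⟨2*b.val+1, hb2'⟩
      set ca : Fin (p/2) := ⟨a.val, hca⟩
      set cb : Fin (p/2) := ⟨b.val, hcb⟩
      have hpa : 0 < Λ ca := hpos ca a.isLt
      have hpb : 0 < Λ cb := hpos cb b.isLt
      have e2 : Λ cb * k i0 j0 = Λ ca * k i1 j1 := by
        have h := congrFun (congrFun hcomm i0) j1
        rwa [mulD2_col_odd' p Λ k j1 j0 cb rfl rfl i0,
          D2mul_row_even' p Λ k i0 i1 ca rfl rfl j1] at h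
      have e3 : Λ cb * k i1 j1 = Λ ca * k i0 j0 := by
        have h := congrFun (congrFun hcomm i1) j0
        rw [mulD2_col_even' p Λ k j0 j1 cb rfl rfl i1,
          D2mul_row_odd' p Λ k i1 i0 ca rfl rfl j0] at h
        exact neg_injective h
      show k i0 j0 = k i1 j1
      rcases eq_or_ne (Λ ca) (Λ cb) with he | hne
      · apply mul_left_cancel₀ hpb.ne'
        rw [e2, he]
      · have hx : k i0 j0 = 0 := by
          have h3 : (Λ cb * Λ cb - Λ ca * Λ ca) * k i0 j0 = 0 := by
            linear_combination Λ cb * e2 + Λ ca * e3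
          rcases mul_eq_zero.mp h3 with h | h
          · exfalso
            have := sub_eq_zero.mp h
            rcases mul_self_eq_mul_self_iff.mp this with h' | h'
            · exact hne h'.symm
            · nlinarith
          · exact h
        have hw : k i1 j1 = 0 := by
          have h3 : (Λ cb * Λ cb - Λ ca * Λ ca) * k i1 j1 = 0 := by
            linear_combination Λ cb * e3 + Λ ca * e2
          rcases mul_eq_zero.mp h3 with h | h
          · exfalso
            have := sub_eq_zero.mp h
            rcases mul_self_eq_mul_self_iff.mp this with h' | h'
            · exact hne h'.symm
            · nlinarith
          · exact h
        rw [hx, hw]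
    · -- hs2
      intro a b
      have ha2 : 2*a.val < p := by have := a.isLt; omega
      have ha2' : 2*a.val + 1 < p := by have := a.isLt; omega
      have hb2 : 2*b.val < p := by have := b.isLt; omega
      have hb2' : 2*b.val + 1 < p := by have := b.isLt; omega
      have hca : a.val < p/2 := by have := a.isLt; omega
      have hcb : b.val < p/2 := by have := b.isLt; omega
      set i0 : Fin p := ⟨2*a.val, ha2⟩
      set i1 : Fin p := ⟨2*a.val+1, ha2'⟩
      set j0 : Fin p := ⟨2*b.val, hb2⟩
      set j1 : Fin p := ⟨2*b.val+1, hb2'⟩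
      set ca : Fin (p/2) := ⟨a.val, hca⟩
      set cb : Fin (p/2) := ⟨b.val, hcb⟩
      have hpa : 0 < Λ ca := hpos ca a.isLt
      have hpb : 0 < Λ cb := hpos cb b.isLt
      have e1 : -(Λ cb * k i0 j1) = Λ ca * k i1 j0 := by
        have h := congrFun (congrFun hcomm i0) j0
        rwa [mulD2_col_even' p Λ k j0 j1 cb rfl rfl i0,
          D2mul_row_even' p Λ k i0 i1 ca rfl rfl j0] at h
      have e4 : Λ cb * k i1 j0 = -(Λ ca * k i0 j1) := by
        have h := congrFun (congrFun hcomm i1) j1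
        rwa [mulD2_col_odd' p Λ k j1 j0 cb rfl rfl i1,
          D2mul_row_odd' p Λ k i1 i0 ca rfl rfl j1] at h
      show k i0 j1 = -k i1 j0
      rcases eq_or_ne (Λ ca) (Λ cb) with he | hne
      · apply mul_left_cancel₀ hpb.ne'
        have h5 : Λ cb * k i0 j1 = Λ cb * (-k i1 j0) := by
          linear_combination (-1 : ℝ) * e1 - k i1 j0 * he
        rw [h5]
      · have hx : k i0 j1 = 0 := by
          have h3 : (Λ cb * Λ cb - Λ ca * Λ ca) * k i0 j1 = 0 := by
            linear_combination (-(Λ cb)) * e1 - Λ ca * e4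
          rcases mul_eq_zero.mp h3 with h | h
          · exfalso
            have := sub_eq_zero.mp h
            rcases mul_self_eq_mul_self_iff.mp this with h' | h'
            · exact hne h'.symm
            · nlinarith
          · exact h
        have hw : k i1 j0 = 0 := by
          have h3 : (Λ cb * Λ cb - Λ ca * Λ ca) * k i1 j0 = 0 := by
            linear_combination Λ ca * e1 + Λ cb * e4
          rcases mul_eq_zero.mp h3 with h | h
          · exfalso
            have := sub_eq_zero.mp h
            rcases mul_self_eq_mul_self_iff.mp this with h' | h'
            · exact hne h'.symm
            · nlinarith
          · exact h
        rw [hx, hw, neg_zero]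
  refine ⟨?_, horth1, hcommb, horth2, hfix2, hdet⟩
  rintro i j (⟨hi, hj⟩ | ⟨hi, hj⟩)
  · exact hblock1 i j hi (by omega)
  · exact hblock2 i j (by omega) hj
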